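/- Suppose (B_n) is a sequence of positive integers satisfying: for every prime p, if p divides B_n, then for all positive integers k, ord_p(B_{nk}) = ord_p(B_n) + ord_p(k). Then (B_n) is a strong divisibility sequence: gcd(B_r, B_n) = B_{gcd(r,n)} for all positive integers r, n, provided additionally that every prime dividing gcd(B_r, B_n) also divides B_{gcd(r,n)}. -/
import Mathlib


/-- Abstract strong divisibility principle: if `(B_n)` is a sequence of positive
integers such that `ord_p(B_{nk}) = ord_p(B_n) + ord_p(k)` whenever `p` is a prime
dividing `B_n`, and every prime dividing `gcd(B_r, B_n)` also divides `B_{gcd(r,n)}`,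
then `gcd(B_r, B_n) = B_{gcd(r,n)}` for all positive `r, n`. -/
theorem strong_divisibility_of_ord_relation (B : ℕ → ℕ)
    (hpos : ∀ n, 0 < n → 0 < B n)
    (hord : ∀ (p n k : ℕ), p.Prime → 0 < n → 0 < k → p ∣ B n →
      padicValNat p (B (n * k)) = padicValNat p (B n) + padicValNat p k)
    (hclaim : ∀ (r n : ℕ), 0 < r → 0 < n → ∀ p : ℕ, p.Prime →
      p ∣ Nat.gcd (B r) (B n) → p ∣ B (Nat.gcd r n)) :
    ∀ r n : ℕ, 0 < r → 0 < n → Nat.gcd (B r) (B n) = B (Nat.gcd r n) := by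
  intro r n hr hn
  set d := Nat.gcd r n with hd
  have hd0 : 0 < d := Nat.gcd_pos_of_pos_left n hr
  obtain ⟨a, ha⟩ := Nat.gcd_dvd_left r n
  obtain ⟨b, hb⟩ := Nat.gcd_dvd_right r n
  have ha0 : 0 < a := by
    rcases Nat.eq_zero_or_pos a with h | h
    · simp [h] at ha; omega
    · exact h
  have hb0 : 0 < b := by
    rcases Nat.eq_zero_or_pos b with h | h
    · simp [h] at hb; omega
    · exact h
  have hBd : 0 < B d := hpos d hd0
  have hBr : 0 < B r := hpos r hr
  have hBn : 0 < B n := hpos n hn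
  have hab : Nat.Coprime a b := by
    have := Nat.coprime_div_gcd_div_gcd (m := r) (n := n) hd0
    have h1 : r / d = a := by rw [ha]; exact Nat.mul_div_cancel_left a hd0
    have h2 : n / d = b := by rw [hb]; exact Nat.mul_div_cancel_left b hd0
    rwa [h1, h2] at this
  -- valuation facts
  have hvr : ∀ p : ℕ, p.Prime → p ∣ B d →
      padicValNat p (B r) = padicValNat p (B d) + padicValNat p a := by
    intro p hp hpd
    rw [ha]; exact hord p d a hp hd0 ha0 hpd
  have hvn : ∀ p : ℕ, p.Prime → p ∣ B d →
      padicValNat p (B n) = padicValNat p (B d) + padicValNat p b := by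
    intro p hp hpd
    rw [hb]; exact hord p d b hp hd0 hb0 hpd
  apply Nat.dvd_antisymm
  · -- gcd (B r) (B n) ∣ B d
    rw [← Nat.factorization_le_iff_dvd (Nat.gcd_pos_of_pos_left (B n) hBr).ne' hBd.ne']
    intro p
    by_cases hp : p.Prime
    · by_cases hpg : p ∣ Nat.gcd (B r) (B n)
      · have hpd : p ∣ B d := hclaim r n hr hn p hp hpg
        have hmin : padicValNat p a = 0 ∨ padicValNat p b = 0 := by
          by_contra hcon
          push_neg at hcon
          have h1 : p ∣ a := by
            by_contra h
            exact hcon.1 (padicValNat.eq_zero_of_not_dvd h)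
          have h2 : p ∣ b := by
            by_contra h
            exact hcon.2 (padicValNat.eq_zero_of_not_dvd h)
          have : p ∣ 1 := hab ▸ Nat.dvd_gcd h1 h2
          exact hp.one_lt.ne' (Nat.dvd_one.mp this)
        rw [Nat.factorization_gcd hBr.ne' hBn.ne']
        simp only [Finsupp.inf_apply]
        rw [Nat.factorization_def _ hp, Nat.factorization_def _ hp,
          Nat.factorization_def _ hp, hvr p hp hpd, hvn p hp hpd]
        rcases hmin with h | h <;> simp [h]
      · have : Nat.factorization (Nat.gcd (B r) (B n)) p = 0 :=
          Nat.factorization_eq_zero_of_not_dvd hpg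
        simp [this]
    · simp [Nat.factorization_eq_zero_of_not_prime _ hp]
  · -- B d ∣ gcd
    apply Nat.dvd_gcd
    · rw [← Nat.factorization_le_iff_dvd hBd.ne' hBr.ne']
      intro p
      by_cases hp : p.Prime
      · by_cases hpd : p ∣ B d
        · rw [Nat.factorization_def _ hp, Nat.factorization_def _ hp, hvr p hp hpd]
          exact Nat.le_add_right _ _
        · simp [Nat.factorization_eq_zero_of_not_dvd hpd]
      · simp [Nat.factorization_eq_zero_of_not_prime _ hp]
    · rw [← Nat.factorization_le_iff_dvd hBd.ne' hBn.ne']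
      intro p
      by_cases hp : p.Prime
      · by_cases hpd : p ∣ B d
        · rw [Nat.factorization_def _ hp, Nat.factorization_def _ hp, hvn p hp hpd]
          exact Nat.le_add_right _ _
        · simp [Nat.factorization_eq_zero_of_not_dvd hpd]
      · simp [Nat.factorization_eq_zero_of_not_prime _ hp]
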